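/- For Berglund–Hübsch data (A, q, G), with ĉ = d − 2Σ_j q_j ∈ ℤ, the identity Ell(W/G, z + τ, τ) = (−1)^{ĉ} e^{−iπĉ(τ + 2z)} Ell(W/G, z, τ) holds at every (z, τ) ∈ ℂ × H at which all theta-function denominators appearing on both sides are nonzero. -/

import Mathlib

/-- The Jacobi theta function
`Θ(ν, τ) = i q^{1/8} e^{−iπν}(1 − e^{2πiν}) ∏_{n≥1} (1 − q^n)(1 − q^n e^{2πiν})(1 − q^n e^{−2πiν})`
with `q = e^{2πiτ}` and `q^{1/8} = e^{iπτ/4}`. -/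
noncomputable def Theta (ν τ : ℂ) : ℂ :=
  Complex.I * Complex.exp (Real.pi * Complex.I * τ / 4) *
    Complex.exp (-(Real.pi * Complex.I * ν)) *
    (1 - Complex.exp (2 * Real.pi * Complex.I * ν)) *
    ∏' n : ℕ,
      ((1 - Complex.exp (2 * Real.pi * Complex.I * τ) ^ (n + 1)) *
        (1 - Complex.exp (2 * Real.pi * Complex.I * τ) ^ (n + 1) *
          Complex.exp (2 * Real.pi * Complex.I * ν)) *
        (1 - Complex.exp (2 * Real.pi * Complex.I * τ) ^ (n + 1) *
          Complex.exp (-(2 * Real.pi * Complex.I * ν))))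

/-- The Berglund–Hübsch elliptic genus
`Ell(W/G, z, τ) = (1/|G|) Σ_{n,n₁∈G} Π_j e^{−2πizθ_j(n)} ·
Θ((1−q_j)z − θ_j(n)τ − θ_j(n₁), τ) / Θ(q_j z + θ_j(n)τ + θ_j(n₁), τ)`,
where the group `G ⊆ ℚ^d/ℤ^d` is encoded by the finite set of its canonical
representatives with components in `[0,1)`, so that `θ_j(n) = n j`. -/
noncomputable def Ell (d : ℕ) (q : Fin d → ℚ) (G : Finset (Fin d → ℚ)) (z τ : ℂ) : ℂ :=
  (G.card : ℂ)⁻¹ *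
    ∑ n ∈ G, ∑ n₁ ∈ G, ∏ j : Fin d,
      Complex.exp (-(2 * Real.pi * Complex.I * z * (n j : ℂ))) *
        Theta ((1 - (q j : ℂ)) * z - (n j : ℂ) * τ - (n₁ j : ℂ)) τ /
        Theta ((q j : ℂ) * z + (n j : ℂ) * τ + (n₁ j : ℂ)) τ

/-- All theta-function denominators in the defining formula of `Ell` are
nonzero at `(z, τ)`. -/
def EllDenomNE (d : ℕ) (q : Fin d → ℚ) (G : Finset (Fin d → ℚ)) (z τ : ℂ) : Prop :=
  ∀ n ∈ G, ∀ n₁ ∈ G, ∀ j : Fin d,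
    Theta ((q j : ℂ) * z + (n j : ℂ) * τ + (n₁ j : ℂ)) τ ≠ 0

section ThetaAux
open Complex Filter

lemma hasProd_zero_of_eq_zero {f : ℕ → ℂ} {i : ℕ} (h : f i = 0) : HasProd f 0 := by
  have hev : (fun s : Finset ℕ => ∏ k ∈ s, f k) =ᶠ[atTop] fun _ => (0 : ℂ) := by
    filter_upwards [Filter.eventually_ge_atTop ({i} : Finset ℕ)] with s hs
    exact Finset.prod_eq_zero (hs (Finset.mem_singleton_self i)) h
  exact (tendsto_congr' hev).mpr tendsto_const_nhds


lemma multipliable_aux {Q : ℂ} (hQ : ‖Q‖ < 1) (a : ℂ) :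
    Multipliable (fun n : ℕ => 1 - Q ^ (n + 1) * a) := by
  by_cases h : ∀ n : ℕ, 1 - Q ^ (n + 1) * a ≠ 0
  · refine Complex.multipliable_of_summable_log (f := fun n => 1 - Q ^ (n + 1) * a) ?_
    have hgeom : Summable (fun n : ℕ => (3/2 : ℝ) * (‖Q‖ ^ (n+1) * ‖a‖)) := by
      apply Summable.mul_left
      apply Summable.mul_right
      exact ((summable_geometric_of_lt_one (norm_nonneg Q) hQ).mul_left ‖Q‖).congr
        (fun n => by ring)
    apply Summable.of_norm_bounded_eventually_nat hgeom
    have htend : Tendsto (fun n : ℕ => ‖Q ^ (n+1) * a‖) atTop (nhds 0) := by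
      have h0 : Tendsto (fun n : ℕ => Q ^ n) atTop (nhds 0) :=
        tendsto_pow_atTop_nhds_zero_of_norm_lt_one hQ
      have h1 : Tendsto (fun n : ℕ => Q ^ (n+1) * a) atTop (nhds 0) := by
        simpa using ((h0.comp (tendsto_add_atTop_nat 1)).mul_const a)
      simpa using h1.norm
    filter_upwards [htend.eventually_lt_const (by norm_num : (0:ℝ) < 1/2)] with n hn
    have h2 : ‖-(Q ^ (n+1) * a)‖ ≤ 1/2 := by rw [norm_neg]; exact hn.le
    have := Complex.norm_log_one_add_half_le_self h2
    rw [show (1 : ℂ) + -(Q ^ (n+1) * a) = 1 - Q ^ (n+1) * a by ring, norm_neg] at this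
    simpa [norm_mul, norm_pow] using this
  · push_neg at h
    obtain ⟨n, hn⟩ := h
    exact ⟨0, hasProd_zero_of_eq_zero hn⟩

lemma norm_exp_lt_one {τ : ℂ} (hτ : 0 < τ.im) :
    ‖Complex.exp (2 * Real.pi * Complex.I * τ)‖ < 1 := by
  rw [Complex.norm_exp]
  apply Real.exp_lt_one_iff.mpr
  have : (2 * (Real.pi:ℂ) * Complex.I * τ).re = -(2 * Real.pi * τ.im) := by
    simp [Complex.mul_re, Complex.mul_im, Complex.I_re, Complex.I_im]
  rw [this]
  have := Real.pi_pos
  nlinarith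

lemma Theta_add_tau (ν τ : ℂ) (hτ : 0 < τ.im) :
    Theta (ν + τ) τ =
      -Complex.exp (-(Real.pi * Complex.I * τ) - 2 * Real.pi * Complex.I * ν) * Theta ν τ := by
  set Q := Complex.exp (2 * Real.pi * Complex.I * τ) with hQdef
  set y := Complex.exp (2 * Real.pi * Complex.I * ν) with hydef
  have hQnorm : ‖Q‖ < 1 := norm_exp_lt_one hτ
  have hQ0 : Q ≠ 0 := Complex.exp_ne_zero _
  have hy0 : y ≠ 0 := Complex.exp_ne_zero _
  have hy' : Complex.exp (-(2 * Real.pi * Complex.I * ν)) = y⁻¹ := by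
    rw [Complex.exp_neg]
  have hshift : Complex.exp (2 * Real.pi * Complex.I * (ν + τ)) = y * Q := by
    rw [mul_add, Complex.exp_add]
  have hshift' : Complex.exp (-(2 * Real.pi * Complex.I * (ν + τ))) = y⁻¹ * Q⁻¹ := by
    rw [Complex.exp_neg, hshift, mul_inv]
  have hpre : Complex.exp (-(Real.pi * Complex.I * (ν + τ)))
      = Complex.exp (-(Real.pi * Complex.I * ν)) * Complex.exp (-(Real.pi * Complex.I * τ)) := by
    rw [← Complex.exp_add]; congr 1; ring
  -- multipliable facts
  have hm1 : Multipliable (fun n : ℕ => 1 - Q ^ (n + 1)) :=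
    (multipliable_aux hQnorm 1).congr (fun n => by ring)
  have hm2 : Multipliable (fun n : ℕ => 1 - Q ^ (n + 1) * y) := multipliable_aux hQnorm y
  have hm3 : Multipliable (fun n : ℕ => 1 - Q ^ (n + 1) * y⁻¹) := multipliable_aux hQnorm y⁻¹
  have hm2' : Multipliable (fun n : ℕ => 1 - Q ^ (n + 1 + 1) * y) :=
    (multipliable_aux hQnorm (Q * y)).congr (fun n => by ring)
  -- key product splittings
  have key2 : (∏' n : ℕ, ((1 - Q ^ (n + 1)) * (1 - Q ^ (n + 1) * y) * (1 - Q ^ (n + 1) * y⁻¹)))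
      = (∏' n : ℕ, (1 - Q ^ (n + 1))) *
        ((1 - Q * y) * ∏' n : ℕ, (1 - Q ^ (n + 1 + 1) * y)) *
        (∏' n : ℕ, (1 - Q ^ (n + 1) * y⁻¹)) := by
    rw [Multipliable.tprod_mul (hm1.mul hm2) hm3, Multipliable.tprod_mul hm1 hm2]
    rw [tprod_eq_zero_mul' (f := fun n : ℕ => 1 - Q ^ (n + 1) * y) hm2']
    norm_num
  have key1 : (∏' n : ℕ, ((1 - Q ^ (n + 1)) * (1 - Q ^ (n + 1) * (y * Q)) *
        (1 - Q ^ (n + 1) * (y⁻¹ * Q⁻¹))))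
      = (∏' n : ℕ, (1 - Q ^ (n + 1))) *
        (∏' n : ℕ, (1 - Q ^ (n + 1 + 1) * y)) *
        ((1 - y⁻¹) * ∏' n : ℕ, (1 - Q ^ (n + 1) * y⁻¹)) := by
    have hc : ∀ n : ℕ, (1 - Q ^ (n + 1)) * (1 - Q ^ (n + 1) * (y * Q)) *
        (1 - Q ^ (n + 1) * (y⁻¹ * Q⁻¹))
        = (1 - Q ^ (n + 1)) * (1 - Q ^ (n + 1 + 1) * y) * (1 - Q ^ n * y⁻¹) := by
      intro n
      have h3 : Q ^ (n + 1) * (y⁻¹ * Q⁻¹) = Q ^ n * y⁻¹ := by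
        field_simp
        ring
      rw [h3]; ring_nf
    rw [tprod_congr hc]
    have hm3' : Multipliable (fun n : ℕ => 1 - Q ^ n * y⁻¹) :=
      Multipliable.comp_nat_add (f := fun n : ℕ => 1 - Q ^ n * y⁻¹) (k := 1) hm3
    rw [Multipliable.tprod_mul ((hm1.mul hm2').congr (fun n => rfl)) hm3',
        Multipliable.tprod_mul hm1 hm2',
        tprod_eq_zero_mul' (f := fun n : ℕ => 1 - Q ^ n * y⁻¹)
          (hm3.congr (fun n => rfl))]
    norm_num
  -- now assemble
  rw [Theta, Theta, hpre, hshift, hshift', hy', ← hQdef, ← hydef, key1, key2]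
  have hyinv : (1 - y⁻¹) = -y⁻¹ * (1 - y) := by field_simp; ring
  rw [hyinv, Complex.exp_sub, ← hydef]
  field_simp

lemma Theta_sub_tau (ν τ : ℂ) (hτ : 0 < τ.im) :
    Theta (ν - τ) τ =
      -Complex.exp (-(Real.pi * Complex.I * τ) + 2 * Real.pi * Complex.I * ν) * Theta ν τ := by
  have h := Theta_add_tau (ν - τ) τ hτ
  rw [sub_add_cancel] at h
  rw [h, ← mul_assoc, neg_mul_neg, ← Complex.exp_add,
    show -(Real.pi * Complex.I * τ) + 2 * Real.pi * Complex.I * ν +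
      (-(Real.pi * Complex.I * τ) - 2 * Real.pi * Complex.I * (ν - τ)) = 0 by ring,
    Complex.exp_zero, one_mul]

lemma Theta_mul_shift (τ : ℂ) (hτ : 0 < τ.im) (m : ℤ) (ν : ℂ) :
    Theta (ν + (m : ℂ) * τ) τ =
      (-1 : ℂ) ^ m *
        Complex.exp (-(Real.pi * Complex.I * ((m:ℂ)^2 * τ + 2 * (m:ℂ) * ν))) * Theta ν τ := by
  induction m using Int.induction_on generalizing ν with
  | zero => norm_num
  | succ i ih =>
    have harg : ν + ((i : ℤ) + 1 : ℤ) * τ = (ν + τ) + ((i:ℤ) : ℂ) * τ := by push_cast; ring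
    rw [harg, ih (ν + τ), Theta_add_tau ν τ hτ]
    have hsign : (-1 : ℂ) ^ ((i : ℤ) + 1) = (-1 : ℂ) ^ (i : ℤ) * (-1) :=
      zpow_add_one₀ (by norm_num) _
    have hexp : Complex.exp (-(Real.pi * Complex.I * (((i:ℤ):ℂ)^2 * τ + 2 * ((i:ℤ):ℂ) * (ν + τ))))
        * Complex.exp (-(Real.pi * Complex.I * τ) - 2 * Real.pi * Complex.I * ν)
        = Complex.exp (-(Real.pi * Complex.I *
            ((((i:ℤ)+1 : ℤ):ℂ)^2 * τ + 2 * (((i:ℤ)+1 : ℤ):ℂ) * ν))) := by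
      rw [← Complex.exp_add]; congr 1; push_cast; ring
    rw [hsign, ← hexp]; ring
  | pred i ih =>
    have harg : ν + ((-(i:ℤ) - 1 : ℤ) : ℂ) * τ = (ν - τ) + ((-(i:ℤ) : ℤ) : ℂ) * τ := by
      push_cast; ring
    rw [harg, ih (ν - τ), Theta_sub_tau ν τ hτ]
    have hsign : (-1 : ℂ) ^ (-(i:ℤ) - 1) = (-1 : ℂ) ^ (-(i:ℤ)) * (-1)⁻¹ :=
      zpow_sub_one₀ (by norm_num) _
    have hexp : Complex.exp (-(Real.pi * Complex.I *
          (((-(i:ℤ) : ℤ):ℂ)^2 * τ + 2 * ((-(i:ℤ) : ℤ):ℂ) * (ν - τ))))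
        * Complex.exp (-(Real.pi * Complex.I * τ) + 2 * Real.pi * Complex.I * ν)
        = Complex.exp (-(Real.pi * Complex.I *
            (((-(i:ℤ) - 1 : ℤ):ℂ)^2 * τ + 2 * ((-(i:ℤ) - 1 : ℤ):ℂ) * ν))) := by
      rw [← Complex.exp_add]; congr 1; push_cast; ring
    rw [hsign, ← hexp]
    norm_num
    ring

lemma term_step (z τ : ℂ) (hτ : 0 < τ.im) (a b b' e : ℂ) (M : ℤ)
    (hM : (M : ℂ) = b + a - b' - 1)
    (hden : Theta (a * z + b' * τ + e) τ ≠ 0) :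
    Complex.exp (-(2 * Real.pi * Complex.I * (z + τ) * b)) *
        Theta ((1 - a) * (z + τ) - b * τ - e) τ / Theta (a * (z + τ) + b * τ + e) τ
      = -Complex.exp (-(Real.pi * Complex.I *
            ((2 - 4 * a) * z + (1 - 2 * a) * τ - 2 * e))) *
          (Complex.exp (-(2 * Real.pi * Complex.I * z * b')) *
            Theta ((1 - a) * z - b' * τ - e) τ / Theta (a * z + b' * τ + e) τ) := by
  have h1 : (1 - a) * (z + τ) - b * τ - e
      = ((1 - a) * z - b' * τ - e) + ((-M : ℤ) : ℂ) * τ := by push_cast; rw [hM]; ring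
  have h2 : a * (z + τ) + b * τ + e
      = (a * z + b' * τ + e) + ((M + 1 : ℤ) : ℂ) * τ := by push_cast; rw [hM]; ring
  rw [h1, h2, Theta_mul_shift τ hτ, Theta_mul_shift τ hτ]
  set Θ₁ := Theta ((1 - a) * z - b' * τ - e) τ
  set Θ₂ := Theta (a * z + b' * τ + e) τ
  have hsign : ((-1 : ℂ) ^ (-M)) = -(-1 : ℂ) ^ (M + 1) := by
    have hodd : (-1 : ℂ) ^ (2 * M + 1) = -1 := Odd.neg_one_zpow ⟨M, by ring⟩
    have h3 : ((-1 : ℂ)) ^ (M + 1) = (-1 : ℂ) ^ (-M) * (-1 : ℂ) ^ (2 * M + 1) := by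
      rw [← zpow_add₀ (by norm_num : (-1:ℂ) ≠ 0)]; congr 1; ring
    rw [h3, hodd]; ring
  have hexp : Complex.exp (-(2 * Real.pi * Complex.I * (z + τ) * b)) *
        Complex.exp (-(Real.pi * Complex.I *
          (((-M : ℤ) : ℂ)^2 * τ + 2 * ((-M : ℤ) : ℂ) * ((1 - a) * z - b' * τ - e))))
      = Complex.exp (-(Real.pi * Complex.I * ((2 - 4 * a) * z + (1 - 2 * a) * τ - 2 * e))) *
        Complex.exp (-(2 * Real.pi * Complex.I * z * b')) *
        Complex.exp (-(Real.pi * Complex.I *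
          (((M + 1 : ℤ) : ℂ)^2 * τ + 2 * ((M + 1 : ℤ) : ℂ) * (a * z + b' * τ + e)))) := by
    rw [← Complex.exp_add, ← Complex.exp_add, ← Complex.exp_add]; congr 1; push_cast
    rw [hM]; ring
  have hne2 : (-1 : ℂ) ^ (M + 1) *
      Complex.exp (-(Real.pi * Complex.I *
        (((M + 1 : ℤ) : ℂ)^2 * τ + 2 * ((M + 1 : ℤ) : ℂ) * (a * z + b' * τ + e)))) * Θ₂ ≠ 0 :=
    mul_ne_zero (mul_ne_zero (zpow_ne_zero _ (by norm_num)) (Complex.exp_ne_zero _)) hden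
  rw [← mul_div_assoc, div_eq_div_iff hne2 hden]
  linear_combination (-(Θ₁ * Θ₂ * ((-1 : ℂ) ^ (M + 1)))) * hexp +
      (Θ₁ * Θ₂ * Complex.exp (-(2 * Real.pi * Complex.I * (z + τ) * b)) *
        Complex.exp (-(Real.pi * Complex.I *
          (((-M : ℤ) : ℂ)^2 * τ + 2 * ((-M : ℤ) : ℂ) * ((1 - a) * z - b' * τ - e))))) * hsign

end ThetaAux

/-- `Ell(W/G, z + τ, τ) = (−1)^ĉ e^{−iπĉ(τ + 2z)} Ell(W/G, z, τ)`,
where `ĉ = d − 2Σ_j q_j ∈ ℤ`. -/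
theorem Ell_z_add_tau
    (d : ℕ) (hd : 1 ≤ d)
    (A : Matrix (Fin d) (Fin d) ℕ)
    (hA : (A.map (fun a => (a : ℚ))).det ≠ 0)
    (q : Fin d → ℚ)
    (hq : (A.map (fun a => (a : ℚ))).mulVec q = fun _ => 1)
    (hqpos : ∀ j, 0 < q j)
    (G : Finset (Fin d → ℚ))
    (hGrep : ∀ p ∈ G, ∀ j, 0 ≤ p j ∧ p j < 1)
    (hGaut : ∀ p ∈ G, ∀ i, ∃ t : ℤ, ∑ j, (A i j : ℚ) * p j = (t : ℚ))
    (hGzero : (fun _ => 0 : Fin d → ℚ) ∈ G)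
    (hGadd : ∀ p ∈ G, ∀ p' ∈ G, (fun j => Int.fract (p j + p' j)) ∈ G)
    (hGneg : ∀ p ∈ G, (fun j => Int.fract (-(p j))) ∈ G)
    (hJW : (fun j => Int.fract (q j)) ∈ G)
    (hGsum : ∀ p ∈ G, ∃ t : ℤ, ∑ j, p j = (t : ℚ))
    (c : ℤ) (hc : (c : ℚ) = (d : ℚ) - 2 * ∑ j, q j)
    (z τ : ℂ) (hτ : 0 < τ.im)
    (hden : EllDenomNE d q G z τ) (hden' : EllDenomNE d q G (z + τ) τ) :
    Ell d q G (z + τ) τ =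
      (-1 : ℂ) ^ c * Complex.exp (-(Real.pi * Complex.I * (c : ℂ) * (τ + 2 * z))) *
        Ell d q G z τ := by
  classical
  have hfr : ∀ x y : ℚ, Int.fract (x + Int.fract y) = Int.fract (x + y) := by
    intro x y
    rw [show x + Int.fract y = (x + y) - (⌊y⌋ : ℚ) by rw [Int.fract]; ring, Int.fract_sub_intCast]
  set φ : (Fin d → ℚ) → (Fin d → ℚ) := fun p j => Int.fract (p j + q j) with hφ
  set ψ : (Fin d → ℚ) → (Fin d → ℚ) := fun p j => Int.fract (p j - q j) with hψ
  have hφG : ∀ p ∈ G, φ p ∈ G := by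
    intro p hp
    have h := hGadd p hp _ hJW
    have he : (fun j => Int.fract (p j + Int.fract (q j))) = φ p := funext fun j => hfr _ _
    rwa [he] at h
  have hqneg : (fun j => Int.fract (-q j)) ∈ G := by
    have h := hGneg _ hJW
    have he : (fun j => Int.fract (-(Int.fract (q j)))) = fun j => Int.fract (-q j) := by
      funext j
      rw [show -Int.fract (q j) = (-q j) + (⌊q j⌋ : ℚ) by rw [Int.fract]; ring, Int.fract_add_intCast]
    rwa [he] at h
  have hψG : ∀ p ∈ G, ψ p ∈ G := by
    intro p hp
    have h := hGadd p hp _ hqneg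
    have he : (fun j => Int.fract (p j + Int.fract (-q j))) = ψ p := by
      funext j; rw [hfr]; congr 1; ring
    rwa [he] at h
  have hψφ : ∀ p ∈ G, ψ (φ p) = p := by
    intro p hp; funext j
    show Int.fract (Int.fract (p j + q j) - q j) = p j
    rw [show Int.fract (p j + q j) - q j = (p j + q j - q j) - (⌊p j + q j⌋ : ℚ) by
        rw [Int.fract]; ring,
      Int.fract_sub_intCast, show p j + q j - q j = p j by ring]
    exact Int.fract_eq_self.mpr (hGrep p hp j)
  have hφψ : ∀ p ∈ G, φ (ψ p) = p := by
    intro p hp; funext j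
    show Int.fract (Int.fract (p j - q j) + q j) = p j
    rw [show Int.fract (p j - q j) + q j = (p j - q j + q j) - (⌊p j - q j⌋ : ℚ) by
        rw [Int.fract]; ring,
      Int.fract_sub_intCast, show p j - q j + q j = p j by ring]
    exact Int.fract_eq_self.mpr (hGrep p hp j)
  obtain ⟨t0, ht0⟩ := hGsum _ hJW
  obtain ⟨s, hs⟩ : ∃ s : ℤ, (∑ j, q j) = (s : ℚ) := by
    refine ⟨t0 + ∑ j, ⌊q j⌋, ?_⟩
    push_cast
    rw [← ht0, ← Finset.sum_add_distrib]
    exact Finset.sum_congr rfl fun j _ => (Int.fract_add_floor (q j)).symm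
  have hcds : c = (d : ℤ) - 2 * s := by
    have h : (c : ℚ) = (((d : ℤ) - 2 * s : ℤ) : ℚ) := by rw [hc, hs]; push_cast; ring
    exact_mod_cast h
  have hcC : (c : ℂ) = (d : ℂ) - 2 * (s : ℂ) := by exact_mod_cast hcds
  set K : ℂ := (-1 : ℂ) ^ c * Complex.exp (-(Real.pi * Complex.I * (c : ℂ) * (τ + 2 * z)))
    with hK
  have key : ∀ n ∈ G, ∀ n₁ ∈ G,
      (∏ j : Fin d, Complex.exp (-(2 * Real.pi * Complex.I * (z + τ) * (n j : ℂ))) *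
        Theta ((1 - (q j : ℂ)) * (z + τ) - (n j : ℂ) * τ - (n₁ j : ℂ)) τ /
        Theta ((q j : ℂ) * (z + τ) + (n j : ℂ) * τ + (n₁ j : ℂ)) τ)
      = K * ∏ j : Fin d,
          Complex.exp (-(2 * Real.pi * Complex.I * z * ((φ n) j : ℂ))) *
            Theta ((1 - (q j : ℂ)) * z - ((φ n) j : ℂ) * τ - (n₁ j : ℂ)) τ /
            Theta ((q j : ℂ) * z + ((φ n) j : ℂ) * τ + (n₁ j : ℂ)) τ := by
    intro n hn n₁ hn₁
    obtain ⟨t1, ht1⟩ := hGsum n₁ hn₁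
    have hstep : ∀ j : Fin d,
        Complex.exp (-(2 * Real.pi * Complex.I * (z + τ) * (n j : ℂ))) *
          Theta ((1 - (q j : ℂ)) * (z + τ) - (n j : ℂ) * τ - (n₁ j : ℂ)) τ /
          Theta ((q j : ℂ) * (z + τ) + (n j : ℂ) * τ + (n₁ j : ℂ)) τ
        = -Complex.exp (-(Real.pi * Complex.I *
              ((2 - 4 * (q j : ℂ)) * z + (1 - 2 * (q j : ℂ)) * τ - 2 * (n₁ j : ℂ)))) *
            (Complex.exp (-(2 * Real.pi * Complex.I * z * ((φ n) j : ℂ))) *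
              Theta ((1 - (q j : ℂ)) * z - ((φ n) j : ℂ) * τ - (n₁ j : ℂ)) τ /
              Theta ((q j : ℂ) * z + ((φ n) j : ℂ) * τ + (n₁ j : ℂ)) τ) := by
      intro j
      refine term_step z τ hτ (q j : ℂ) (n j : ℂ) ((φ n) j : ℂ) (n₁ j : ℂ)
        (⌊(n j : ℚ) + q j⌋ - 1) ?_ (hden (φ n) (hφG n hn) n₁ hn₁ j)
      have hfq : ((φ n) j : ℚ) = (n j : ℚ) + q j - (⌊(n j : ℚ) + q j⌋ : ℚ) := by
        show Int.fract _ = _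
        rw [Int.fract]
      have h'' := congrArg (fun x : ℚ => (x : ℂ)) hfq
      push_cast at h'' ⊢
      linear_combination h''
    calc (∏ j : Fin d, Complex.exp (-(2 * Real.pi * Complex.I * (z + τ) * (n j : ℂ))) *
        Theta ((1 - (q j : ℂ)) * (z + τ) - (n j : ℂ) * τ - (n₁ j : ℂ)) τ /
        Theta ((q j : ℂ) * (z + τ) + (n j : ℂ) * τ + (n₁ j : ℂ)) τ)
        = ∏ j : Fin d,
            (-Complex.exp (-(Real.pi * Complex.I *
              ((2 - 4 * (q j : ℂ)) * z + (1 - 2 * (q j : ℂ)) * τ - 2 * (n₁ j : ℂ)))) *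
            (Complex.exp (-(2 * Real.pi * Complex.I * z * ((φ n) j : ℂ))) *
              Theta ((1 - (q j : ℂ)) * z - ((φ n) j : ℂ) * τ - (n₁ j : ℂ)) τ /
              Theta ((q j : ℂ) * z + ((φ n) j : ℂ) * τ + (n₁ j : ℂ)) τ)) :=
          Finset.prod_congr rfl fun j _ => hstep j
      _ = (∏ j : Fin d, -Complex.exp (-(Real.pi * Complex.I *
              ((2 - 4 * (q j : ℂ)) * z + (1 - 2 * (q j : ℂ)) * τ - 2 * (n₁ j : ℂ))))) *
          ∏ j : Fin d,
            (Complex.exp (-(2 * Real.pi * Complex.I * z * ((φ n) j : ℂ))) *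
              Theta ((1 - (q j : ℂ)) * z - ((φ n) j : ℂ) * τ - (n₁ j : ℂ)) τ /
              Theta ((q j : ℂ) * z + ((φ n) j : ℂ) * τ + (n₁ j : ℂ)) τ) :=
          Finset.prod_mul_distrib
      _ = K * ∏ j : Fin d,
            Complex.exp (-(2 * Real.pi * Complex.I * z * ((φ n) j : ℂ))) *
              Theta ((1 - (q j : ℂ)) * z - ((φ n) j : ℂ) * τ - (n₁ j : ℂ)) τ /
              Theta ((q j : ℂ) * z + ((φ n) j : ℂ) * τ + (n₁ j : ℂ)) τ := by
          congr 1
          have hqC : (∑ j : Fin d, ((q j : ℚ) : ℂ)) = (s : ℂ) := by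
            have h1 := congrArg (fun x : ℚ => (x : ℂ)) hs
            push_cast at h1 ⊢
            exact h1
          have hn₁C : (∑ j : Fin d, ((n₁ j : ℚ) : ℂ)) = (t1 : ℂ) := by
            have h1 := congrArg (fun x : ℚ => (x : ℂ)) ht1
            push_cast at h1 ⊢
            exact h1
          have hsum : (∑ j : Fin d, -(Real.pi * Complex.I *
                ((2 - 4 * (q j : ℂ)) * z + (1 - 2 * (q j : ℂ)) * τ - 2 * (n₁ j : ℂ))))
              = -(Real.pi * Complex.I * (c : ℂ) * (τ + 2 * z)) +
                  (t1 : ℂ) * (2 * Real.pi * Complex.I) := by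
            have h2 : (∑ j : Fin d, -(Real.pi * Complex.I *
                ((2 - 4 * (q j : ℂ)) * z + (1 - 2 * (q j : ℂ)) * τ - 2 * (n₁ j : ℂ))))
                = ∑ j : Fin d, (-(Real.pi * Complex.I * (2 * z + τ)) +
                    ((q j : ℚ) : ℂ) * (Real.pi * Complex.I * (4 * z + 2 * τ)) +
                    ((n₁ j : ℚ) : ℂ) * (2 * Real.pi * Complex.I)) :=
              Finset.sum_congr rfl fun j _ => by ring
            rw [h2, Finset.sum_add_distrib, Finset.sum_add_distrib, Finset.sum_const,
              ← Finset.sum_mul, ← Finset.sum_mul, hqC, hn₁C, Finset.card_univ, Fintype.card_fin,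
              nsmul_eq_mul]
            linear_combination (Real.pi * Complex.I * (τ + 2 * z)) * hcC
          have hprod : (∏ j : Fin d, -Complex.exp (-(Real.pi * Complex.I *
              ((2 - 4 * (q j : ℂ)) * z + (1 - 2 * (q j : ℂ)) * τ - 2 * (n₁ j : ℂ)))))
              = (-1 : ℂ) ^ d * Complex.exp (∑ j : Fin d, -(Real.pi * Complex.I *
                  ((2 - 4 * (q j : ℂ)) * z + (1 - 2 * (q j : ℂ)) * τ - 2 * (n₁ j : ℂ)))) := by
            rw [Complex.exp_sum]
            rw [show (∏ j : Fin d, -Complex.exp (-(Real.pi * Complex.I *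
              ((2 - 4 * (q j : ℂ)) * z + (1 - 2 * (q j : ℂ)) * τ - 2 * (n₁ j : ℂ)))))
              = ∏ j : Fin d, ((-1 : ℂ) * Complex.exp (-(Real.pi * Complex.I *
              ((2 - 4 * (q j : ℂ)) * z + (1 - 2 * (q j : ℂ)) * τ - 2 * (n₁ j : ℂ)))))
              from Finset.prod_congr rfl fun j _ => by ring]
            rw [Finset.prod_mul_distrib, Finset.prod_const, Finset.card_univ, Fintype.card_fin]
          rw [hprod, hsum, Complex.exp_add]
          rw [show ((t1 : ℂ) * (2 * Real.pi * Complex.I))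
              = (t1 : ℂ) * (2 * (Real.pi : ℂ) * Complex.I) from rfl,
            Complex.exp_int_mul_two_pi_mul_I, mul_one, hK]
          congr 1
          rw [hcds, zpow_sub₀ (by norm_num : (-1 : ℂ) ≠ 0), zpow_natCast]
          rw [show (2 * s : ℤ) = s * 2 by ring, zpow_mul]
          rcases Int.even_or_odd s with hpar | hpar
          · rw [hpar.neg_one_zpow]; norm_num
          · rw [hpar.neg_one_zpow]; norm_num
  rw [Ell, Ell]
  have hsum2 : (∑ n ∈ G, ∑ n₁ ∈ G, ∏ j : Fin d,
        Complex.exp (-(2 * Real.pi * Complex.I * (z + τ) * (n j : ℂ))) *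
          Theta ((1 - (q j : ℂ)) * (z + τ) - (n j : ℂ) * τ - (n₁ j : ℂ)) τ /
          Theta ((q j : ℂ) * (z + τ) + (n j : ℂ) * τ + (n₁ j : ℂ)) τ)
      = K * ∑ n ∈ G, ∑ n₁ ∈ G, ∏ j : Fin d,
          Complex.exp (-(2 * Real.pi * Complex.I * z * (n j : ℂ))) *
            Theta ((1 - (q j : ℂ)) * z - (n j : ℂ) * τ - (n₁ j : ℂ)) τ /
            Theta ((q j : ℂ) * z + (n j : ℂ) * τ + (n₁ j : ℂ)) τ := by
    rw [Finset.mul_sum]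
    refine Finset.sum_nbij' φ ψ hφG hψG hψφ hφψ (fun a ha => ?_)
    rw [Finset.mul_sum]
    exact Finset.sum_congr rfl fun n₁ hn₁ => key a ha n₁ hn₁
  rw [hsum2, hK]
  ring
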